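/- arXiv:2409.05729 — 4 statements merged into one kernel-verified Lean document; each statement's English description precedes it below -/
import Mathlib

section
/- Suppose max_{S∈𝕊} λ_S < ∞ and max_{S∈𝕊} sup_{x_S} r̄_S(x_S) < ∞, let α*_𝕊 be the minimiser of L over H_𝕊, set θ = E[a(X)] and α* = a − θ − ∑_{S∈𝕊} α*_S. Then the minimal value of the objective satisfies L(α*_𝕊) = E[ α*(X) a(X) ] = E[ α*(X)² ] + ∑_{S∈𝕊} (1/λ_S) E[ α*_S(X_S)² / r̄_S(X_S) ]. -/
open MeasureTheory ProbabilityTheory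

/-- `g` depends only on the coordinates in `S`. -/
def DependsOnCoords {d : ℕ} (S : Finset (Fin d)) (g : (Fin d → ℝ) → ℝ) : Prop :=
  ∀ x y : Fin d → ℝ, (∀ i ∈ S, x i = y i) → g x = g y

/-- Membership in `H_S`. -/
def MemH {d : ℕ} (μ : Measure (Fin d → ℝ)) (S : Finset (Fin d))
    (g : (Fin d → ℝ) → ℝ) : Prop :=
  MemLp g 2 μ ∧ DependsOnCoords S g ∧ ∫ x, g x ∂μ = 0

/-- The objective functional `L`. -/
noncomputable def objective {d : ℕ} (μ : Measure (Fin d → ℝ))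
    (𝕊 : Finset (Finset (Fin d))) (lam : Finset (Fin d) → ℝ)
    (r : Finset (Fin d) → (Fin d → ℝ) → ℝ) (a : (Fin d → ℝ) → ℝ)
    (α : Finset (Fin d) → (Fin d → ℝ) → ℝ) : ℝ :=
  variance (fun x => a x - ∑ S ∈ 𝕊, α S x) μ
    + ∑ S ∈ 𝕊, ∫ x, (α S x) ^ 2 / (lam S * r S x) ∂μ

/-- Two `L²` functions have an integrable product (polarization). -/
lemma integrable_mul_of_memL2 {Ω : Type*} [MeasurableSpace Ω] {μ : Measure Ω}
    {f g : Ω → ℝ} (hf : MemLp f 2 μ) (hg : MemLp g 2 μ) :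
    Integrable (fun x => f x * g x) μ := by
  have h1 : Integrable (fun x => (f x + g x) ^ 2) μ := (hf.add hg).integrable_sq
  have h2 := hf.integrable_sq
  have h3 := hg.integrable_sq
  have heq : (fun x => f x * g x)
      = fun x => ((f x + g x) ^ 2 - f x ^ 2 - g x ^ 2) / 2 := by
    funext x; ring
  rw [heq]
  exact ((h1.sub h2).sub h3).div_const 2

/-- If a quadratic with nonnegative leading coefficient is nonnegative everywhere,
its linear coefficient vanishes. -/
lemma quad_coeff_zero {K c : ℝ} (hK : 0 ≤ K)
    (h : ∀ t : ℝ, 0 ≤ K * t ^ 2 + c * t) : c = 0 := by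
  have hK1 : (0:ℝ) < K + 1 := by linarith
  have h1 := h (-c / (K + 1))
  have h2 : 0 ≤ (K * (-c / (K + 1)) ^ 2 + c * (-c / (K + 1))) * (K + 1) ^ 2 :=
    mul_nonneg h1 (sq_nonneg _)
  have h3 : (K * (-c / (K + 1)) ^ 2 + c * (-c / (K + 1))) * (K + 1) ^ 2 = -c ^ 2 := by
    field_simp
    ring
  rw [h3] at h2
  nlinarith [sq_nonneg c]

/-- The minimal value of the objective:
`L(α*_𝕊) = E[α*(X) a(X)] = E[α*(X)²] + ∑_S λ_S⁻¹ E[α*_S(X_S)²/r̄_S(X_S)]`,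
where `α* = a − θ − ∑_S α*_S`. -/
theorem minimal_objective_value
    (d : ℕ) (hd : 2 ≤ d)
    (μ : Measure (Fin d → ℝ)) [IsProbabilityMeasure μ]
    (𝕊 : Finset (Finset (Fin d))) (h𝕊ne : 𝕊.Nonempty)
    (h𝕊proper : ∀ S ∈ 𝕊, S ≠ Finset.univ)
    (lam : Finset (Fin d) → ℝ) (hlam : ∀ S ∈ 𝕊, 0 < lam S)
    (r : Finset (Fin d) → (Fin d → ℝ) → ℝ)
    (hrpos : ∀ S ∈ 𝕊, ∀ x, 0 < r S x)
    (hrdep : ∀ S ∈ 𝕊, DependsOnCoords S (r S))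
    (hrmeas : ∀ S ∈ 𝕊, Measurable (r S))
    (hrint : ∀ S ∈ 𝕊, ∫ x, r S x ∂μ = 1)
    (C : ℝ) (hrC : ∀ S ∈ 𝕊, ∀ x, r S x ≤ C)
    (a : (Fin d → ℝ) → ℝ) (ha : MemLp a 2 μ)
    (αstar : Finset (Fin d) → (Fin d → ℝ) → ℝ)
    (hαstarH : ∀ S ∈ 𝕊, MemH μ S (αstar S))
    (hαstarMin : ∀ β : Finset (Fin d) → (Fin d → ℝ) → ℝ,
      (∀ S ∈ 𝕊, MemH μ S (β S)) →
      objective μ 𝕊 lam r a αstar ≤ objective μ 𝕊 lam r a β) :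
    objective μ 𝕊 lam r a αstar
        = ∫ x, (a x - (∫ y, a y ∂μ) - ∑ S ∈ 𝕊, αstar S x) * a x ∂μ ∧
    objective μ 𝕊 lam r a αstar
        = (∫ x, (a x - (∫ y, a y ∂μ) - ∑ S ∈ 𝕊, αstar S x) ^ 2 ∂μ)
          + ∑ S ∈ 𝕊, (lam S)⁻¹ * ∫ x, (αstar S x) ^ 2 / r S x ∂μ := by
  classical
  have hα2 : ∀ S ∈ 𝕊, MemLp (αstar S) 2 μ := fun S hS => (hαstarH S hS).1
  have hαint : ∀ S ∈ 𝕊, Integrable (αstar S) μ :=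
    fun S hS => (hα2 S hS).integrable one_le_two
  have hα0 : ∀ S ∈ 𝕊, ∫ x, αstar S x ∂μ = 0 := fun S hS => (hαstarH S hS).2.2
  have haint : Integrable a μ := ha.integrable one_le_two
  set θ : ℝ := ∫ y, a y ∂μ with hθ
  set T : (Fin d → ℝ) → ℝ := fun x => ∑ S ∈ 𝕊, αstar S x with hT
  have hT2 : MemLp T 2 μ := memLp_finset_sum 𝕊 hα2
  have hTint : Integrable T μ := integrable_finset_sum 𝕊 hαint
  set g : (Fin d → ℝ) → ℝ := fun x => a x - T x with hg
  have hg2 : MemLp g 2 μ := ha.sub hT2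
  have hgint : Integrable g μ := haint.sub hTint
  have hgmean : ∫ x, g x ∂μ = θ := by
    have e1 : ∫ x, g x ∂μ = (∫ x, a x ∂μ) - ∫ x, T x ∂μ := integral_sub haint hTint
    have e2 : ∫ x, T x ∂μ = ∑ S ∈ 𝕊, ∫ x, αstar S x ∂μ := integral_finset_sum 𝕊 hαint
    have e3 : ∑ S ∈ 𝕊, ∫ x, αstar S x ∂μ = 0 := Finset.sum_eq_zero hα0
    rw [e1, e2, e3, sub_zero, hθ]
  -- abbreviations
  set A : Finset (Fin d) → ℝ := fun S => ∫ x, g x * αstar S x ∂μ with hA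
  set J : Finset (Fin d) → ℝ :=
    fun S => ∫ x, (αstar S x) ^ 2 / (lam S * r S x) ∂μ with hJ
  have hgsq : Integrable (fun x => g x ^ 2) μ := hg2.integrable_sq
  have hgα : ∀ S ∈ 𝕊, Integrable (fun x => g x * αstar S x) μ :=
    fun S hS => integrable_mul_of_memL2 hg2 (hα2 S hS)
  have hvarg : variance g μ = (∫ x, g x ^ 2 ∂μ) - θ ^ 2 := by
    rw [variance_eq_sub hg2, hgmean]
    congr 1
  have hobj : objective μ 𝕊 lam r a αstar = variance g μ + ∑ S ∈ 𝕊, J S := rfl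
  -- First-order condition: A S = J S for every S ∈ 𝕊.
  have key : ∀ S₀ ∈ 𝕊, A S₀ = J S₀ := by
    intro S₀ hS₀
    have hα₀2 : MemLp (αstar S₀) 2 μ := hα2 S₀ hS₀
    set B : ℝ := ∫ x, (αstar S₀ x) ^ 2 ∂μ with hB
    have hBnn : 0 ≤ B := integral_nonneg fun x => sq_nonneg _
    have hJnn : 0 ≤ J S₀ :=
      integral_nonneg fun x => div_nonneg (sq_nonneg _)
        (mul_nonneg (hlam S₀ hS₀).le (hrpos S₀ hS₀ x).le)
    have hineq : ∀ t : ℝ, 0 ≤ (B + J S₀) * t ^ 2 + (2 * (J S₀ - A S₀)) * t := by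
      intro t
      set β : Finset (Fin d) → (Fin d → ℝ) → ℝ :=
        fun S => if S = S₀ then (fun x => (1 + t) * αstar S₀ x) else αstar S with hβ
      have hβS₀ : β S₀ = fun x => (1 + t) * αstar S₀ x := by simp [hβ]
      have hβne : ∀ S, S ≠ S₀ → β S = αstar S := by intro S h; simp [hβ, h]
      have hβH : ∀ S ∈ 𝕊, MemH μ S (β S) := by
        intro S hS
        by_cases h : S = S₀
        · subst h
          refine ⟨?_, ?_, ?_⟩
          · rw [hβS₀]; exact hα₀2.const_mul (1 + t)
          · intro x y hxy
            rw [hβS₀]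
            show (1 + t) * αstar S x = (1 + t) * αstar S y
            rw [(hαstarH S hS).2.1 x y hxy]
          · rw [hβS₀]
            have : ∫ x, (1 + t) * αstar S x ∂μ = (1 + t) * ∫ x, αstar S x ∂μ :=
              integral_const_mul _ _
            rw [this, hα0 S hS, mul_zero]
        · rw [hβne S h]; exact hαstarH S hS
      have hle := hαstarMin β hβH
      -- compute the perturbed objective
      have hsumβ : ∀ x, ∑ S ∈ 𝕊, β S x = T x + t * αstar S₀ x := by
        intro x
        have h1 : ∀ S ∈ 𝕊, β S x
            = αstar S x + (if S = S₀ then t * αstar S₀ x else 0) := by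
          intro S hS
          by_cases h : S = S₀
          · subst h; rw [hβS₀, if_pos rfl]; ring
          · rw [hβne S h, if_neg h, add_zero]
        rw [Finset.sum_congr rfl h1, Finset.sum_add_distrib,
          Finset.sum_ite_eq' 𝕊 S₀, if_pos hS₀, hT]
      have hvarβ : variance (fun x => a x - ∑ S ∈ 𝕊, β S x) μ
          = (∫ x, g x ^ 2 ∂μ) - 2 * t * A S₀ + t ^ 2 * B - θ ^ 2 := by
        have hfun : (fun x => a x - ∑ S ∈ 𝕊, β S x)
            = fun x => g x - t * αstar S₀ x := by
          funext x; rw [hsumβ x, hg]; ring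
        rw [hfun]
        have hmem : MemLp (fun x => g x - t * αstar S₀ x) 2 μ :=
          hg2.sub (hα₀2.const_mul t)
        rw [variance_eq_sub hmem]
        have e0 : ((fun x => g x - t * αstar S₀ x) ^ 2)
            = fun x => g x ^ 2 - 2 * t * (g x * αstar S₀ x)
              + t ^ 2 * (αstar S₀ x) ^ 2 := by
          funext x; simp only [Pi.pow_apply]; ring
        have i1 : Integrable (fun x => g x ^ 2 - 2 * t * (g x * αstar S₀ x)) μ :=
          hgsq.sub ((hgα S₀ hS₀).const_mul (2 * t))
        have i2 : Integrable (fun x => t ^ 2 * (αstar S₀ x) ^ 2) μ :=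
          (hα₀2.integrable_sq).const_mul (t ^ 2)
        have e1 : ∫ x, (g x ^ 2 - 2 * t * (g x * αstar S₀ x)
              + t ^ 2 * (αstar S₀ x) ^ 2) ∂μ
            = (∫ x, (g x ^ 2 - 2 * t * (g x * αstar S₀ x)) ∂μ)
              + ∫ x, t ^ 2 * (αstar S₀ x) ^ 2 ∂μ := integral_add i1 i2
        have e2 : ∫ x, (g x ^ 2 - 2 * t * (g x * αstar S₀ x)) ∂μ
            = (∫ x, g x ^ 2 ∂μ) - ∫ x, 2 * t * (g x * αstar S₀ x) ∂μ :=
          integral_sub hgsq ((hgα S₀ hS₀).const_mul (2 * t))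
        have e3 : ∫ x, 2 * t * (g x * αstar S₀ x) ∂μ = 2 * t * A S₀ :=
          integral_const_mul _ _
        have e4 : ∫ x, t ^ 2 * (αstar S₀ x) ^ 2 ∂μ = t ^ 2 * B :=
          integral_const_mul _ _
        have e5 : ∫ x, (g x - t * αstar S₀ x) ∂μ = θ := by
          have e6 : ∫ x, (g x - t * αstar S₀ x) ∂μ
              = (∫ x, g x ∂μ) - ∫ x, t * αstar S₀ x ∂μ :=
            integral_sub hgint ((hαint S₀ hS₀).const_mul t)
          have e7 : ∫ x, t * αstar S₀ x ∂μ = t * ∫ x, αstar S₀ x ∂μ :=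
            integral_const_mul _ _
          rw [e6, e7, hα0 S₀ hS₀, hgmean, mul_zero, sub_zero]
        rw [e0, e1, e2, e3, e4, e5]
        try ring
      have hsumJβ : ∑ S ∈ 𝕊, ∫ x, (β S x) ^ 2 / (lam S * r S x) ∂μ
          = (∑ S ∈ 𝕊, J S) + ((1 + t) ^ 2 - 1) * J S₀ := by
        have h1 : ∀ S ∈ 𝕊, ∫ x, (β S x) ^ 2 / (lam S * r S x) ∂μ
            = J S + (if S = S₀ then ((1 + t) ^ 2 - 1) * J S₀ else 0) := by
          intro S hS
          by_cases h : S = S₀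
          · subst h
            rw [if_pos rfl]
            have hpt : (fun x => (β S x) ^ 2 / (lam S * r S x))
                = fun x => (1 + t) ^ 2 * ((αstar S x) ^ 2 / (lam S * r S x)) := by
              funext x
              rw [hβS₀]
              rw [mul_pow, mul_div_assoc]
            have e1 : ∫ x, (β S x) ^ 2 / (lam S * r S x) ∂μ
                = (1 + t) ^ 2 * ∫ x, (αstar S x) ^ 2 / (lam S * r S x) ∂μ := by
              rw [hpt]; exact integral_const_mul _ _
            rw [e1]
            show (1 + t) ^ 2 * J S = J S + ((1 + t) ^ 2 - 1) * J S
            ring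
          · rw [if_neg h, add_zero, hβne S h]
        rw [Finset.sum_congr rfl h1, Finset.sum_add_distrib,
          Finset.sum_ite_eq' 𝕊 S₀, if_pos hS₀]
      have hobjβ : objective μ 𝕊 lam r a β
          = (∫ x, g x ^ 2 ∂μ) - 2 * t * A S₀ + t ^ 2 * B - θ ^ 2
            + ((∑ S ∈ 𝕊, J S) + ((1 + t) ^ 2 - 1) * J S₀) := by
        rw [objective, hvarβ, hsumJβ]
      rw [hobj, hobjβ, hvarg] at hle
      nlinarith [hle]
    have := quad_coeff_zero (by linarith : (0:ℝ) ≤ B + J S₀) hineq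
    linarith
  -- Final assembly.
  have hstar : ∀ x, a x - θ - ∑ S ∈ 𝕊, αstar S x = g x - θ := by
    intro x; rw [hg, hT]; ring
  constructor
  · -- first identity
    have hpt : (fun x => (a x - θ - ∑ S ∈ 𝕊, αstar S x) * a x)
        = fun x => (g x ^ 2 + ∑ S ∈ 𝕊, g x * αstar S x) - θ * a x := by
      funext x
      rw [hstar x, ← Finset.mul_sum]
      simp only [hg, hT]
      ring
    have i3 : Integrable (fun x => g x ^ 2 + ∑ S ∈ 𝕊, g x * αstar S x) μ :=
      hgsq.add (integrable_finset_sum 𝕊 hgα)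
    have e1 : ∫ x, ((g x ^ 2 + ∑ S ∈ 𝕊, g x * αstar S x) - θ * a x) ∂μ
        = (∫ x, (g x ^ 2 + ∑ S ∈ 𝕊, g x * αstar S x) ∂μ) - ∫ x, θ * a x ∂μ :=
      integral_sub i3 (haint.const_mul θ)
    have e2 : ∫ x, (g x ^ 2 + ∑ S ∈ 𝕊, g x * αstar S x) ∂μ
        = (∫ x, g x ^ 2 ∂μ) + ∫ x, ∑ S ∈ 𝕊, g x * αstar S x ∂μ :=
      integral_add hgsq (integrable_finset_sum 𝕊 hgα)
    have e3 : ∫ x, ∑ S ∈ 𝕊, g x * αstar S x ∂μ = ∑ S ∈ 𝕊, A S :=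
      integral_finset_sum 𝕊 hgα
    have e4 : ∫ x, θ * a x ∂μ = θ * θ := by
      rw [integral_const_mul, ← hθ]
    have e5 : ∑ S ∈ 𝕊, A S = ∑ S ∈ 𝕊, J S := Finset.sum_congr rfl key
    rw [hobj, hvarg, hpt, e1, e2, e3, e4, e5]
    ring
  · -- second identity
    have h1 : ∫ x, (a x - θ - ∑ S ∈ 𝕊, αstar S x) ^ 2 ∂μ
        = (∫ x, g x ^ 2 ∂μ) - θ ^ 2 := by
      have hpt : (fun x => (a x - θ - ∑ S ∈ 𝕊, αstar S x) ^ 2)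
          = fun x => (g x ^ 2 - 2 * θ * g x) + θ ^ 2 := by
        funext x; rw [hstar x]; ring
      have i1 : Integrable (fun x => g x ^ 2 - 2 * θ * g x) μ :=
        hgsq.sub (hgint.const_mul (2 * θ))
      have e1 : ∫ x, ((g x ^ 2 - 2 * θ * g x) + θ ^ 2) ∂μ
          = (∫ x, (g x ^ 2 - 2 * θ * g x) ∂μ) + ∫ _x, θ ^ 2 ∂μ :=
        integral_add i1 (integrable_const _)
      have e2 : ∫ x, (g x ^ 2 - 2 * θ * g x) ∂μ
          = (∫ x, g x ^ 2 ∂μ) - ∫ x, 2 * θ * g x ∂μ :=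
        integral_sub hgsq (hgint.const_mul (2 * θ))
      have e3 : ∫ x, 2 * θ * g x ∂μ = 2 * θ * θ := by
        rw [integral_const_mul, hgmean]
      have e4 : ∫ _x : (Fin d → ℝ), θ ^ 2 ∂μ = θ ^ 2 := by
        simp
      rw [hpt, e1, e2, e3, e4]
      ring
    have h2 : ∀ S ∈ 𝕊, J S = (lam S)⁻¹ * ∫ x, (αstar S x) ^ 2 / r S x ∂μ := by
      intro S hS
      show ∫ x, (αstar S x) ^ 2 / (lam S * r S x) ∂μ = _
      have hpt : (fun x => (αstar S x) ^ 2 / (lam S * r S x))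
          = fun x => (lam S)⁻¹ * ((αstar S x) ^ 2 / r S x) := by
        funext x
        rw [div_mul_eq_div_div_swap, div_eq_inv_mul]
      rw [hpt]
      exact integral_const_mul _ _
    rw [hobj, hvarg, h1, Finset.sum_congr rfl h2]
end

section
/- Suppose max_{S∈𝕊} λ_S < ∞ and max_{S∈𝕊} sup r̄_S < ∞, and let α*_𝕊 be the minimiser of L over H_𝕊. Then Var( ∑_{S∈𝕊} α*_S(X_S) ) + ∑_{S∈𝕊} E[ α*_S(X_S)² / (λ_S r̄_S(X_S)) ] = Var(a(X)) − L(α*_𝕊); in particular this quantity is at most Var(a(X)). -/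
open MeasureTheory ProbabilityTheory

/-- Product of two L² functions is integrable (via the polarisation identity). -/
lemma integrable_mul_of_memℒp_two {Ω : Type*} {m : MeasurableSpace Ω} {μ : Measure Ω}
    {f g : Ω → ℝ} (hf : MemLp f 2 μ) (hg : MemLp g 2 μ) :
    Integrable (fun x => f x * g x) μ := by
  have h1 : Integrable (fun x => (f x + g x) ^ 2) μ := (hf.add hg).integrable_sq
  have h2 : Integrable (fun x => f x ^ 2) μ := hf.integrable_sq
  have h3 : Integrable (fun x => g x ^ 2) μ := hg.integrable_sq
  have h4 : Integrable (fun x => (1/2 : ℝ) * (((f x + g x) ^ 2 - f x ^ 2) - g x ^ 2)) μ :=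
    ((h1.sub h2).sub h3).const_mul _
  refine h4.congr (Filter.Eventually.of_forall fun x => ?_)
  ring

/-- Minimality of a quadratic at `s = 1` forces `B = A`. -/
lemma quad_eq_of_min (A B : ℝ) (hA : 0 ≤ A)
    (h : ∀ s : ℝ, A - 2 * B ≤ s ^ 2 * A - 2 * s * B) : B = A := by
  rcases eq_or_lt_of_le hA with hA0 | hApos
  · have h0 := h 0
    have h2 := h 2
    rw [← hA0] at h0 h2 ⊢
    nlinarith
  · have h2 := h (B / A)
    have hAne : A ≠ 0 := ne_of_gt hApos
    have hkey : (B / A) ^ 2 * A - 2 * (B / A) * B = -(B ^ 2) / A := by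
      field_simp; ring
    rw [hkey, le_div_iff₀ hApos] at h2
    have hsq : (A - B) ^ 2 ≤ 0 := by nlinarith
    have : A - B = 0 := by nlinarith [sq_nonneg (A - B)]
    linarith

/-- The value of the quadratic form `Q` at the minimiser:
`Q(α*_𝕊) = Var(a(X)) − L(α*_𝕊) ≤ Var(a(X))`. -/
theorem quadratic_form_at_minimiser
    (d : ℕ) (hd : 2 ≤ d)
    (μ : Measure (Fin d → ℝ)) [IsProbabilityMeasure μ]
    (𝕊 : Finset (Finset (Fin d))) (h𝕊ne : 𝕊.Nonempty)
    (h𝕊proper : ∀ S ∈ 𝕊, S ≠ Finset.univ)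
    (lam : Finset (Fin d) → ℝ) (hlam : ∀ S ∈ 𝕊, 0 < lam S)
    (r : Finset (Fin d) → (Fin d → ℝ) → ℝ)
    (hrpos : ∀ S ∈ 𝕊, ∀ x, 0 < r S x)
    (hrdep : ∀ S ∈ 𝕊, DependsOnCoords S (r S))
    (hrmeas : ∀ S ∈ 𝕊, Measurable (r S))
    (hrint : ∀ S ∈ 𝕊, ∫ x, r S x ∂μ = 1)
    (C : ℝ) (hrC : ∀ S ∈ 𝕊, ∀ x, r S x ≤ C)
    (a : (Fin d → ℝ) → ℝ) (ha : MemLp a 2 μ)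
    (αstar : Finset (Fin d) → (Fin d → ℝ) → ℝ)
    (hαstarH : ∀ S ∈ 𝕊, MemH μ S (αstar S))
    (hαstarMin : ∀ β : Finset (Fin d) → (Fin d → ℝ) → ℝ,
      (∀ S ∈ 𝕊, MemH μ S (β S)) →
      objective μ 𝕊 lam r a αstar ≤ objective μ 𝕊 lam r a β) :
    variance (fun x => ∑ S ∈ 𝕊, αstar S x) μ
          + ∑ S ∈ 𝕊, ∫ x, (αstar S x) ^ 2 / (lam S * r S x) ∂μ
        = variance a μ - objective μ 𝕊 lam r a αstar ∧
    variance (fun x => ∑ S ∈ 𝕊, αstar S x) μ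
          + ∑ S ∈ 𝕊, ∫ x, (αstar S x) ^ 2 / (lam S * r S x) ∂μ
        ≤ variance a μ := by
  classical
  set T : (Fin d → ℝ) → ℝ := fun x => ∑ S ∈ 𝕊, αstar S x with hTdef
  have hαmem : ∀ S ∈ 𝕊, MemLp (αstar S) 2 μ := fun S hS => (hαstarH S hS).1
  have hTmem : MemLp T 2 μ := by
    have hfun : (∑ S ∈ 𝕊, αstar S) = T := by
      funext x; rw [hTdef]; simp [Finset.sum_apply]
    exact hfun ▸ memLp_finset_sum' (μ := μ) (p := 2) 𝕊 hαmem
  have hone_two : (1 : ENNReal) ≤ 2 := one_le_two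
  have hTint0 : ∫ x, T x ∂μ = 0 := by
    rw [hTdef]
    rw [integral_finset_sum 𝕊 (fun S hS => ((hαmem S hS).integrable hone_two))]
    exact Finset.sum_eq_zero fun S hS => (hαstarH S hS).2.2
  -- basic integrability facts
  have haInt : Integrable a μ := ha.integrable hone_two
  have haSq : Integrable (fun x => a x ^ 2) μ := ha.integrable_sq
  have hTSq : Integrable (fun x => T x ^ 2) μ := hTmem.integrable_sq
  have haT : Integrable (fun x => a x * T x) μ := integrable_mul_of_memℒp_two ha hTmem
  set Ia : ℝ := ∫ x, a x ∂μ with hIa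
  set Ia2 : ℝ := ∫ x, a x ^ 2 ∂μ with hIa2
  set B : ℝ := ∫ x, a x * T x ∂μ with hB
  set IT2 : ℝ := ∫ x, T x ^ 2 ∂μ with hIT2
  set P : ℝ := ∑ S ∈ 𝕊, ∫ x, (αstar S x) ^ 2 / (lam S * r S x) ∂μ with hP
  have hPnn : 0 ≤ P := by
    refine Finset.sum_nonneg fun S hS => integral_nonneg fun x => ?_
    exact div_nonneg (sq_nonneg _) (mul_pos (hlam S hS) (hrpos S hS x)).le
  -- variance of a - s • T
  have hVar : ∀ s : ℝ, variance (fun x => a x - s * T x) μ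
      = Ia2 - 2 * s * B + s ^ 2 * IT2 - Ia ^ 2 := by
    intro s
    have hmem : MemLp (fun x => a x - s * T x) 2 μ := ha.sub (hTmem.const_mul s)
    rw [variance_eq_sub hmem]
    have h1 : ∫ x, ((fun x => a x - s * T x) ^ 2) x ∂μ
        = Ia2 - 2 * s * B + s ^ 2 * IT2 := by
      have heq : ∀ x, ((fun x => a x - s * T x) ^ 2) x
          = a x ^ 2 - (2 * s) * (a x * T x) + s ^ 2 * T x ^ 2 := by
        intro x; simp [Pi.pow_apply]; ring
      have hI3 : Integrable (fun x => (2 * s) * (a x * T x)) μ := haT.const_mul _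
      have hI1 : Integrable (fun x => a x ^ 2 - (2 * s) * (a x * T x)) μ := haSq.sub hI3
      have hI2 : Integrable (fun x => s ^ 2 * T x ^ 2) μ := hTSq.const_mul _
      rw [integral_congr_ae (Filter.Eventually.of_forall heq)]
      rw [integral_add hI1 hI2, integral_sub haSq hI3, integral_const_mul, integral_const_mul]
    have h2 : ∫ x, (a x - s * T x) ∂μ = Ia := by
      rw [integral_sub haInt ((hTmem.const_mul s).integrable hone_two), integral_const_mul,
        hTint0]
      simp [hIa]
    rw [h1, h2]
  -- the objective along the scaling direction
  have hObj : ∀ s : ℝ, objective μ 𝕊 lam r a (fun S x => s * αstar S x)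
      = Ia2 - 2 * s * B + s ^ 2 * IT2 - Ia ^ 2 + s ^ 2 * P := by
    intro s
    unfold objective
    have h1 : (fun x => a x - ∑ S ∈ 𝕊, s * αstar S x) = fun x => a x - s * T x := by
      funext x; rw [hTdef, Finset.mul_sum]
    have h2 : ∀ S ∈ 𝕊, ∫ x, (s * αstar S x) ^ 2 / (lam S * r S x) ∂μ
        = s ^ 2 * ∫ x, (αstar S x) ^ 2 / (lam S * r S x) ∂μ := by
      intro S hS
      rw [← integral_const_mul]
      congr 1; funext x; ring
    rw [h1, hVar s, Finset.sum_congr rfl h2, ← Finset.mul_sum, ← hP]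
  have hObjStar : objective μ 𝕊 lam r a αstar
      = Ia2 - 2 * B + IT2 - Ia ^ 2 + P := by
    have := hObj 1
    simp only [one_mul, one_pow, mul_one] at this
    exact this
  -- minimality gives the key identity B = IT2 + P
  have hBeq : B = IT2 + P := by
    refine quad_eq_of_min (IT2 + P) B ?_ ?_
    · have : 0 ≤ IT2 := integral_nonneg fun x => sq_nonneg _
      linarith
    · intro s
      have hmin := hαstarMin (fun S x => s * αstar S x) ?_
      · rw [hObj s, hObjStar] at hmin
        nlinarith [hmin]
      · intro S hS
        obtain ⟨hm, hdep, hint⟩ := hαstarH S hS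
        refine ⟨hm.const_mul s, fun x y hxy => by simp only []; rw [hdep x y hxy], ?_⟩
        show ∫ x, s * αstar S x ∂μ = 0
        rw [integral_const_mul, hint, mul_zero]
  have hVarT : variance T μ = IT2 := by
    rw [variance_eq_sub hTmem, hTint0]
    simp [Pi.pow_apply, hIT2]
  have hVara : variance a μ = Ia2 - Ia ^ 2 := by
    rw [variance_eq_sub ha]
    simp [Pi.pow_apply, hIa2, hIa]
  have hgoal : variance (fun x => ∑ S ∈ 𝕊, αstar S x) μ
      + ∑ S ∈ 𝕊, ∫ x, (αstar S x) ^ 2 / (lam S * r S x) ∂μ = IT2 + P := by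
    rw [← hP, ← hTdef, hVarT]
  constructor
  · rw [hgoal, hObjStar, hVara]; linarith
  · rw [hgoal, hVara]
    have h0 : 0 ≤ objective μ 𝕊 lam r a αstar := by
      unfold objective
      exact add_nonneg (variance_nonneg _ _) hPnn
    rw [hObjStar] at h0
    linarith
end

section
/- Let X₁,…,X_n be i.i.d. with density f and, independently, for each S ∈ 𝕊 let X_{S,1},…,X_{S,n_S} be i.i.d. on ℝ^S with density r̄_S f_S, all samples mutually independent. Suppose a is bounded, 0 < c ≤ r̄_S ≤ C < ∞ for all S ∈ 𝕊, and max_{S∈𝕊} λ_S < ∞. Define the oracle estimator θ*^{(M)} = (1/n) ∑_{i=1}^{n} { a(X_i) − ∑_{S∈𝕊} α_S^{(M)}(X_i) } + ∑_{S∈𝕊} (1/n_S) ∑_{j=1}^{n_S} α_S^{(M)}(X_{S,j}) / r̄_S(X_{S,j}). Then θ*^{(M)} is an unbiased estimator of θ = E[a(X)], and n · Var(θ*^{(M)}) ≤ (1 + max_{S∈𝕊} | n λ_S / n_S − 1 |) · L(α_𝕊^{(M)}). -/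
open MeasureTheory ProbabilityTheory

/-- The weight `λ_S r̄_S(x_S) / (1 + λ_S r̄_S(x_S))`. -/
noncomputable def wgt {d : ℕ} (lam : Finset (Fin d) → ℝ)
    (r : Finset (Fin d) → (Fin d → ℝ) → ℝ) (S : Finset (Fin d)) (x : Fin d → ℝ) : ℝ :=
  lam S * r S x / (1 + lam S * r S x)

/-- The iterated shifted conditional expectations `ā_Ss^{(m)}`, built from the
conditional-law kernels `K S` (so that `E[g(X) | X_S = x_S] = ∫ g d(K S x)`):
`ā_∅^{(0)} = a` and
`ā_{(Ss,S)}^{(m+1)}(x) = w_S(x) (E[ā_Ss^{(m)}(X) | X_S = x_S] − θ̄_{(Ss,S)}^{(m+1)})`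
with `θ̄_{(Ss,S)}^{(m+1)} = ∫ w_S ā_Ss^{(m)} dμ / ∫ w_S dμ`. -/
noncomputable def abarF {d : ℕ} (μ : Measure (Fin d → ℝ))
    (K : Finset (Fin d) → Kernel (Fin d → ℝ) (Fin d → ℝ))
    (lam : Finset (Fin d) → ℝ) (r : Finset (Fin d) → (Fin d → ℝ) → ℝ)
    (a : (Fin d → ℝ) → ℝ) :
    (m : ℕ) → (Fin m → Finset (Fin d)) → (Fin d → ℝ) → ℝ
  | 0, _ => a
  | m + 1, Ss => fun x =>
      wgt lam r (Ss (Fin.last m)) x *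
        ((∫ y, abarF μ K lam r a m (fun j => Ss j.castSucc) y ∂((K (Ss (Fin.last m))) x))
          - (∫ x', wgt lam r (Ss (Fin.last m)) x'
                * abarF μ K lam r a m (fun j => Ss j.castSucc) x' ∂μ)
            / (∫ x', wgt lam r (Ss (Fin.last m)) x' ∂μ))

/-- `Ss ∈ 𝕊^{(m)}`: all entries lie in `𝕊` and consecutive entries are distinct. -/
def ValidChain {d : ℕ} (𝕊 : Finset (Finset (Fin d))) (m : ℕ)
    (Ss : Fin m → Finset (Fin d)) : Prop :=
  (∀ j, Ss j ∈ 𝕊) ∧ ∀ j k : Fin m, (k : ℕ) = (j : ℕ) + 1 → Ss j ≠ Ss k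

instance {d : ℕ} (𝕊 : Finset (Finset (Fin d))) (m : ℕ) :
    DecidablePred (ValidChain 𝕊 m) := fun Ss => by
  unfold ValidChain; infer_instance

/-- The chains `Ss ∈ 𝕊^{(m)}` with `S_m = S`. -/
def chainsEndAt {d : ℕ} (𝕊 : Finset (Finset (Fin d))) (m : ℕ) (S : Finset (Fin d)) :
    Finset (Fin m → Finset (Fin d)) :=
  Finset.univ.filter fun Ss =>
    ValidChain 𝕊 m Ss ∧ ∀ j : Fin m, (j : ℕ) = m - 1 → Ss j = S

/-- `b_{M,η}(m) = P(B ≥ m)` for `B ~ Bin(M, η)`. -/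
noncomputable def bProb (M : ℕ) (η : ℝ) (m : ℕ) : ℝ :=
  ∑ i ∈ Finset.Icc m M, (M.choose i : ℝ) * η ^ i * (1 - η) ^ (M - i)

/-- The approximate influence-function components
`α_S^{(M)} = ∑_{m=1}^M (−1)^{m−1} ∑_{Ss ∈ 𝕊^{(m)} : S_m = S} b_{M,η}(m) ā_Ss^{(m)}`
with step size `η = 1/|𝕊|`. -/
noncomputable def alphaM {d : ℕ} (μ : Measure (Fin d → ℝ))
    (K : Finset (Fin d) → Kernel (Fin d → ℝ) (Fin d → ℝ))
    (𝕊 : Finset (Finset (Fin d))) (lam : Finset (Fin d) → ℝ)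
    (r : Finset (Fin d) → (Fin d → ℝ) → ℝ) (a : (Fin d → ℝ) → ℝ)
    (M : ℕ) (S : Finset (Fin d)) (x : Fin d → ℝ) : ℝ :=
  ∑ m ∈ Finset.Icc 1 M, (-1 : ℝ) ^ (m - 1) * bProb M ((𝕊.card : ℝ))⁻¹ m *
    ∑ Ss ∈ chainsEndAt 𝕊 m S, abarF μ K lam r a m Ss x

section AuxLemmas

variable {d : ℕ}

lemma bdd_sum {ι X : Type*} (s : Finset ι) (f : ι → X → ℝ)
    (h : ∀ i ∈ s, ∃ B, ∀ x, |f i x| ≤ B) :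
    ∃ B, 0 ≤ B ∧ ∀ x, |∑ i ∈ s, f i x| ≤ B := by
  classical
  induction s using Finset.induction_on with
  | empty => exact ⟨0, le_refl _, by simp⟩
  | insert k s hk ih =>
    obtain ⟨B1, hB1⟩ := h k (Finset.mem_insert_self k s)
    obtain ⟨B2, hB20, hB2⟩ := ih fun i hi => h i (Finset.mem_insert_of_mem hi)
    refine ⟨|B1| + B2, by positivity, fun x => ?_⟩
    rw [Finset.sum_insert hk]
    exact (abs_add_le _ _).trans (add_le_add ((hB1 x).trans (le_abs_self B1)) (hB2 x))

lemma wgt_mem {lam : Finset (Fin d) → ℝ} {r : Finset (Fin d) → (Fin d → ℝ) → ℝ}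
    {S : Finset (Fin d)} {c : ℝ} (hl : 0 < lam S) (hc : 0 < c)
    (hr : ∀ x, c ≤ r S x) (x : Fin d → ℝ) :
    lam S * c / (1 + lam S * c) ≤ wgt lam r S x ∧ 0 ≤ wgt lam r S x ∧ wgt lam r S x ≤ 1 := by
  have hrx : c ≤ r S x := hr x
  have h1 : lam S * c ≤ lam S * r S x := by nlinarith
  have h2 : (0:ℝ) < lam S * c := by positivity
  have h3 : (0:ℝ) < 1 + lam S * r S x := by nlinarith
  refine ⟨?_, ?_, ?_⟩
  · rw [wgt, div_le_div_iff₀ (by nlinarith) h3]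
    nlinarith
  · exact div_nonneg (by nlinarith) h3.le
  · rw [wgt, div_le_one h3]; nlinarith

lemma wgt_meas {lam : Finset (Fin d) → ℝ} {r : Finset (Fin d) → (Fin d → ℝ) → ℝ}
    {S : Finset (Fin d)} (hr : Measurable (r S)) : Measurable (wgt lam r S) :=
  (measurable_const.mul hr).div (measurable_const.add (measurable_const.mul hr))

lemma abar_meas_bdd (μ : Measure (Fin d → ℝ)) [IsProbabilityMeasure μ]
    (𝕊 : Finset (Finset (Fin d)))
    (K : Finset (Fin d) → Kernel (Fin d → ℝ) (Fin d → ℝ))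
    (hK : ∀ S ∈ 𝕊, IsMarkovKernel (K S))
    (lam : Finset (Fin d) → ℝ) (hlam : ∀ S ∈ 𝕊, 0 < lam S)
    (r : Finset (Fin d) → (Fin d → ℝ) → ℝ) (hrmeas : ∀ S ∈ 𝕊, Measurable (r S))
    (c : ℝ) (hc : 0 < c) (hrc : ∀ S ∈ 𝕊, ∀ x, c ≤ r S x)
    (a : (Fin d → ℝ) → ℝ) (hameas : Measurable a) (Ca : ℝ) (ha : ∀ x, |a x| ≤ Ca) :
    ∀ m (Ss : Fin m → Finset (Fin d)), (∀ j, Ss j ∈ 𝕊) →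
      Measurable (abarF μ K lam r a m Ss) ∧ ∃ B, ∀ x, |abarF μ K lam r a m Ss x| ≤ B := by
  intro m
  induction m with
  | zero => intro Ss _; exact ⟨hameas, Ca, ha⟩
  | succ m ih =>
    intro Ss hSs
    have hS : Ss (Fin.last m) ∈ 𝕊 := hSs _
    haveI : IsMarkovKernel (K (Ss (Fin.last m))) := hK _ hS
    obtain ⟨hpm, B, hB⟩ := ih (fun j => Ss j.castSucc) (fun j => hSs _)
    set S := Ss (Fin.last m) with hSdef
    set prev := abarF μ K lam r a m (fun j => Ss j.castSucc) with hprev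
    have hB0 : 0 ≤ B := le_trans (abs_nonneg _) (hB 0)
    have hwmeas : Measurable (wgt lam r S) := wgt_meas (hrmeas S hS)
    have hwmem := wgt_mem (hlam S hS) hc (hrc S hS)
    set w0 : ℝ := lam S * c / (1 + lam S * c) with hw0
    have hw0pos : 0 < w0 := by
      have := hlam S hS
      rw [hw0]; positivity
    -- measurability of the kernel integral
    have hGmeas : Measurable fun x => ∫ y, prev y ∂(K S) x := by
      have : StronglyMeasurable (Function.uncurry fun (_ : Fin d → ℝ) y => prev y) :=
        (hpm.comp measurable_snd).stronglyMeasurable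
      exact this.integral_kernel_prod_right.measurable
    have hGbdd : ∀ x, |∫ y, prev y ∂(K S) x| ≤ B := by
      intro x
      rw [← Real.norm_eq_abs]
      have h1 : ‖∫ y, prev y ∂(K S) x‖ ≤ B * ((K S x) Set.univ).toReal :=
        norm_integral_le_of_norm_le_const (Filter.Eventually.of_forall fun y => by
          rw [Real.norm_eq_abs]; exact hB y)
      simpa using h1
    -- numerator and denominator bounds
    have hnum : |∫ x', wgt lam r S x' * prev x' ∂μ| ≤ B := by
      rw [← Real.norm_eq_abs]
      have h1 : ‖∫ x', wgt lam r S x' * prev x' ∂μ‖ ≤ B * (μ Set.univ).toReal := by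
        apply norm_integral_le_of_norm_le_const
        apply Filter.Eventually.of_forall
        intro y
        rw [Real.norm_eq_abs, abs_mul]
        have h2 : |wgt lam r S y| * |prev y| ≤ 1 * B :=
          mul_le_mul (by rw [abs_of_nonneg (hwmem y).2.1]; exact (hwmem y).2.2)
            (hB y) (abs_nonneg _) one_pos.le
        simpa using h2
      simpa using h1
    have hwint : Integrable (wgt lam r S) μ :=
      (integrable_const (1:ℝ)).mono' hwmeas.aestronglyMeasurable
        (Filter.Eventually.of_forall fun x => by
          rw [Real.norm_eq_abs, abs_of_nonneg (hwmem x).2.1]; exact (hwmem x).2.2)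
    have hden : w0 ≤ ∫ x', wgt lam r S x' ∂μ := by
      have := integral_mono (integrable_const w0) hwint (fun x => (hwmem x).1)
      simpa using this
    have htheta : |(∫ x', wgt lam r S x' * prev x' ∂μ) / (∫ x', wgt lam r S x' ∂μ)| ≤ B / w0 := by
      rw [abs_div]
      exact div_le_div₀ hB0 hnum hw0pos (le_trans hden (le_abs_self _))
    have habar : abarF μ K lam r a (m + 1) Ss = fun x =>
        wgt lam r S x * ((∫ y, prev y ∂(K S) x)
          - (∫ x', wgt lam r S x' * prev x' ∂μ) / (∫ x', wgt lam r S x' ∂μ)) := rfl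
    rw [habar]
    constructor
    · exact hwmeas.mul (hGmeas.sub measurable_const)
    · refine ⟨B + B / w0, fun x => ?_⟩
      rw [abs_mul, abs_of_nonneg (hwmem x).2.1]
      have h2 : wgt lam r S x * |(∫ y, prev y ∂(K S) x)
            - (∫ x', wgt lam r S x' * prev x' ∂μ) / (∫ x', wgt lam r S x' ∂μ)|
          ≤ 1 * (B + B / w0) := by
        apply mul_le_mul (hwmem x).2.2 ?_ (abs_nonneg _) one_pos.le
        exact (abs_sub _ _).trans (add_le_add (hGbdd x) htheta)
      simpa using h2

end AuxLemmas
lemma chain_mem_S {d : ℕ} {𝕊 : Finset (Finset (Fin d))} {m : ℕ} {S : Finset (Fin d)}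
    {Ss : Fin m → Finset (Fin d)} (h : Ss ∈ chainsEndAt 𝕊 m S) : ∀ j, Ss j ∈ 𝕊 :=
  ((Finset.mem_filter.mp h).2.1).1

lemma alphaM_meas_bdd {d : ℕ} (μ : Measure (Fin d → ℝ)) [IsProbabilityMeasure μ]
    (𝕊 : Finset (Finset (Fin d)))
    (K : Finset (Fin d) → Kernel (Fin d → ℝ) (Fin d → ℝ))
    (hK : ∀ S ∈ 𝕊, IsMarkovKernel (K S))
    (lam : Finset (Fin d) → ℝ) (hlam : ∀ S ∈ 𝕊, 0 < lam S)
    (r : Finset (Fin d) → (Fin d → ℝ) → ℝ) (hrmeas : ∀ S ∈ 𝕊, Measurable (r S))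
    (c : ℝ) (hc : 0 < c) (hrc : ∀ S ∈ 𝕊, ∀ x, c ≤ r S x)
    (a : (Fin d → ℝ) → ℝ) (hameas : Measurable a) (Ca : ℝ) (ha : ∀ x, |a x| ≤ Ca)
    (M : ℕ) (S : Finset (Fin d)) :
    Measurable (alphaM μ K 𝕊 lam r a M S) ∧
      ∃ B, 0 ≤ B ∧ ∀ x, |alphaM μ K 𝕊 lam r a M S x| ≤ B := by
  have key : ∀ m (Ss : Fin m → Finset (Fin d)), Ss ∈ chainsEndAt 𝕊 m S →
      Measurable (abarF μ K lam r a m Ss) ∧ ∃ B, ∀ x, |abarF μ K lam r a m Ss x| ≤ B :=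
    fun m Ss h => abar_meas_bdd μ 𝕊 K hK lam hlam r hrmeas c hc hrc a hameas Ca ha m Ss
      (chain_mem_S h)
  constructor
  · apply Finset.measurable_sum
    intro m _
    exact (Finset.measurable_sum _ fun Ss hSs => (key m Ss hSs).1).const_mul _
  · apply bdd_sum
    intro m _
    obtain ⟨B, hB0, hB⟩ := bdd_sum (chainsEndAt 𝕊 m S) _ (fun Ss hSs => (key m Ss hSs).2)
    exact ⟨|(-1 : ℝ) ^ (m - 1) * bProb M ((𝕊.card : ℝ))⁻¹ m| * B, fun x => by
      rw [abs_mul]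
      exact mul_le_mul_of_nonneg_left (hB x) (abs_nonneg _)⟩
lemma memLp_of_bdd {Ω : Type*} [MeasurableSpace Ω] (P : Measure Ω) [IsFiniteMeasure P]
    {f : Ω → ℝ} (hf : Measurable f) (B : ℝ) (hB : ∀ ω, |f ω| ≤ B) : MemLp f 2 P :=
  MemLp.of_bound hf.aestronglyMeasurable B (Filter.Eventually.of_forall fun ω => by
    rw [Real.norm_eq_abs]; exact hB ω)

lemma variance_comp_map {Ω : Type*} [MeasurableSpace Ω] (P : Measure Ω) [IsProbabilityMeasure P]
    {E : Type*} [MeasurableSpace E] (φ : Ω → E) (hφ : Measurable φ)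
    (ψ : E → ℝ) (hψ : Measurable ψ) (B : ℝ) (hB : ∀ x, |ψ x| ≤ B) :
    variance (fun ω => ψ (φ ω)) P = variance ψ (Measure.map φ P) := by
  haveI : IsProbabilityMeasure (Measure.map φ P) := Measure.isProbabilityMeasure_map hφ.aemeasurable
  have h1 : MemLp (fun ω => ψ (φ ω)) 2 P :=
    memLp_of_bdd P (hψ.comp hφ) B (fun ω => hB (φ ω))
  have h2 : MemLp ψ 2 (Measure.map φ P) := memLp_of_bdd _ hψ B hB
  rw [variance_eq_sub h1, variance_eq_sub h2]
  have eA : ∫ x, (ψ ^ 2) x ∂(Measure.map φ P) = ∫ ω, ((fun ω => ψ (φ ω)) ^ 2) ω ∂P := by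
    simp only [Pi.pow_apply]
    rw [integral_map hφ.aemeasurable (hψ.pow_const 2).aestronglyMeasurable]
  have eB : ∫ x, ψ x ∂(Measure.map φ P) = ∫ ω, ψ (φ ω) ∂P :=
    integral_map hφ.aemeasurable hψ.aestronglyMeasurable
  rw [eA, eB]
/-- Proposition 7, part 2 (properties of the oracle estimator `θ*^{(M)}`): it is
unbiased for `θ = E[a(X)]`, and `n Var(θ*^{(M)}) ≤ (1 + max_S |nλ_S/n_S − 1|) L(α_𝕊^{(M)})`. -/
theorem oracle_estimator_unbiased_and_variance
    (d : ℕ) (hd : 2 ≤ d)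
    (μ : Measure (Fin d → ℝ)) [IsProbabilityMeasure μ]
    (𝕊 : Finset (Finset (Fin d))) (h𝕊ne : 𝕊.Nonempty)
    (h𝕊proper : ∀ S ∈ 𝕊, S ≠ Finset.univ)
    (lam : Finset (Fin d) → ℝ) (hlam : ∀ S ∈ 𝕊, 0 < lam S)
    (lamMax : ℝ) (hlamMax : ∀ S ∈ 𝕊, lam S ≤ lamMax)
    (r : Finset (Fin d) → (Fin d → ℝ) → ℝ)
    (hrdep : ∀ S ∈ 𝕊, DependsOnCoords S (r S))
    (hrmeas : ∀ S ∈ 𝕊, Measurable (r S))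
    (hrint : ∀ S ∈ 𝕊, ∫ x, r S x ∂μ = 1)
    (c C : ℝ) (hc : 0 < c)
    (hrc : ∀ S ∈ 𝕊, ∀ x, c ≤ r S x) (hrC : ∀ S ∈ 𝕊, ∀ x, r S x ≤ C)
    (a : (Fin d → ℝ) → ℝ) (hameas : Measurable a)
    (habd : ∃ Ca, ∀ x, |a x| ≤ Ca)
    -- K S is the conditional law of X given X_S
    (K : Finset (Fin d) → Kernel (Fin d → ℝ) (Fin d → ℝ))
    (hKmarkov : ∀ S ∈ 𝕊, IsMarkovKernel (K S))
    (hKdep : ∀ S ∈ 𝕊, ∀ x y : Fin d → ℝ, (∀ i ∈ S, x i = y i) → (K S) x = (K S) y)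
    (hKdisint : ∀ S ∈ 𝕊, ∀ g : ({i : Fin d // i ∈ S} → ℝ) → (Fin d → ℝ) → ℝ,
      Measurable (Function.uncurry g) → (∀ p y, |g p y| ≤ 1) →
      ∫ x, (∫ y, g (fun i => x i.1) y ∂((K S) x)) ∂μ = ∫ x, g (fun i => x i.1) x ∂μ)
    -- the data: X₁,…,X_n i.i.d. ~ f and, independently, X_{S,1},…,X_{S,n_S} i.i.d. ~ r̄_S f_S
    (Ω : Type) [MeasurableSpace Ω] (P : Measure Ω) [IsProbabilityMeasure P]
    (n : ℕ) (hn : 1 ≤ n) (nS : Finset (Fin d) → ℕ) (hnS : ∀ S ∈ 𝕊, 1 ≤ nS S)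
    (X : Fin n → Ω → (Fin d → ℝ)) (hXmeas : ∀ i, Measurable (X i))
    (XS : (S : Finset (Fin d)) → Fin (nS S) → Ω → (Fin d → ℝ))
    (hXSmeas : ∀ S, ∀ j, Measurable (XS S j))
    (hXlaw : ∀ i, Measure.map (X i) P = μ)
    (hXSlaw : ∀ S ∈ 𝕊, ∀ j, Measure.map (XS S j) P
      = μ.withDensity fun x => ENNReal.ofReal (r S x))
    (hIndep : iIndepFun
      (Sum.elim X (fun p : Σ S : {S : Finset (Fin d) // S ∈ 𝕊}, Fin (nS S.1) =>
        XS p.1.1 p.2)) P)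
    (M : ℕ) :
    -- the oracle estimator θ*^{(M)}
    (let θhat : Ω → ℝ := fun ω =>
      (n : ℝ)⁻¹ * ∑ i : Fin n,
          (a (X i ω) - ∑ S ∈ 𝕊, alphaM μ K 𝕊 lam r a M S (X i ω))
        + ∑ S ∈ 𝕊, (nS S : ℝ)⁻¹ *
            ∑ j : Fin (nS S), alphaM μ K 𝕊 lam r a M S (XS S j ω) / r S (XS S j ω)
    (∫ ω, θhat ω ∂P = ∫ x, a x ∂μ) ∧
      (n : ℝ) * variance θhat P
        ≤ (1 + 𝕊.sup' h𝕊ne fun S => |(n : ℝ) * lam S / (nS S : ℝ) - 1|) *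
            objective μ 𝕊 lam r a (alphaM μ K 𝕊 lam r a M)) := by
  classical
  intro θhat
  obtain ⟨Ca, hCa⟩ := habd
  have hαf : ∀ S, Measurable (alphaM μ K 𝕊 lam r a M S) ∧
      ∃ B, 0 ≤ B ∧ ∀ x, |alphaM μ K 𝕊 lam r a M S x| ≤ B :=
    fun S => alphaM_meas_bdd μ 𝕊 K hKmarkov lam hlam r hrmeas c hc hrc a hameas Ca hCa M S
  set α : Finset (Fin d) → (Fin d → ℝ) → ℝ := alphaM μ K 𝕊 lam r a M with hαdef
  have hαmeas : ∀ S, Measurable (α S) := fun S => (hαf S).1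
  choose Bα hBα0 hBα using fun S => (hαf S).2
  -- the function g = a - ∑ α_S and its bound
  set g : (Fin d → ℝ) → ℝ := fun x => a x - ∑ S ∈ 𝕊, α S x with hgdef
  have hgmeas : Measurable g := hameas.sub (Finset.measurable_sum _ fun S _ => hαmeas S)
  obtain ⟨B2, hB20, hB2⟩ := bdd_sum 𝕊 (fun S x => α S x) (fun S _ => ⟨Bα S, hBα S⟩)
  have hgbd : ∀ x, |g x| ≤ Ca + B2 := fun x => (abs_sub _ _).trans (add_le_add (hCa x) (hB2 x))
  -- the functions h_S = α_S / r_S and their bounds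
  set h : Finset (Fin d) → (Fin d → ℝ) → ℝ := fun S x => α S x / r S x with hhdef
  have hhmeas : ∀ S ∈ 𝕊, Measurable (h S) := fun S hS => (hαmeas S).div (hrmeas S hS)
  have hrpos : ∀ S ∈ 𝕊, ∀ x, 0 < r S x := fun S hS x => lt_of_lt_of_le hc (hrc S hS x)
  have hhbd : ∀ S ∈ 𝕊, ∀ x, |h S x| ≤ Bα S / c := by
    intro S hS x
    have : |α S x / r S x| ≤ Bα S / c := by
      rw [abs_div]
      exact div_le_div₀ (hBα0 S) (hBα S x) hc (le_trans (hrc S hS x) (le_abs_self _))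
    exact this
  -- the biased-sample measures ν_S
  set ν : Finset (Fin d) → Measure (Fin d → ℝ) :=
    fun S => μ.withDensity fun x => ENNReal.ofReal (r S x) with hνdef
  have hνprob : ∀ S ∈ 𝕊, IsProbabilityMeasure (ν S) := by
    intro S hS
    have : ν S = Measure.map (XS S ⟨0, hnS S hS⟩) P := (hXSlaw S hS ⟨0, hnS S hS⟩).symm
    rw [this]
    exact Measure.isProbabilityMeasure_map (hXSmeas S _).aemeasurable
  have hνint : ∀ S ∈ 𝕊, ∀ φ : (Fin d → ℝ) → ℝ,
      ∫ x, φ x ∂(ν S) = ∫ x, r S x * φ x ∂μ := by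
    intro S hS φ
    have hd1 : ν S = μ.withDensity fun x => ((Real.toNNReal (r S x) : NNReal) : ENNReal) := rfl
    rw [hd1, integral_withDensity_eq_integral_smul ((hrmeas S hS).real_toNNReal) φ]
    congr 1
    funext x
    rw [NNReal.smul_def, Real.coe_toNNReal _ (hrpos S hS x).le, smul_eq_mul]
  -- law transport for integrals
  have hmapX : ∀ (i : Fin n) (φ : (Fin d → ℝ) → ℝ), Measurable φ →
      ∫ ω, φ (X i ω) ∂P = ∫ x, φ x ∂μ := by
    intro i φ hφ
    rw [← hXlaw i, integral_map (hXmeas i).aemeasurable hφ.aestronglyMeasurable]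
  have hmapXS : ∀ S ∈ 𝕊, ∀ (j : Fin (nS S)) (φ : (Fin d → ℝ) → ℝ), Measurable φ →
      ∫ ω, φ (XS S j ω) ∂P = ∫ x, φ x ∂(ν S) := by
    intro S hS j φ hφ
    have : ν S = Measure.map (XS S j) P := (hXSlaw S hS j).symm
    rw [this, integral_map (hXSmeas S j).aemeasurable hφ.aestronglyMeasurable]
  -- integrability of compositions
  have hcomp_int : ∀ (φ : (Fin d → ℝ) → ℝ), Measurable φ → ∀ (B : ℝ), (∀ x, |φ x| ≤ B) →
      ∀ (ξ : Ω → Fin d → ℝ), Measurable ξ → Integrable (fun ω => φ (ξ ω)) P := by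
    intro φ hφ B hB ξ hξ
    exact (integrable_const B).mono' (hφ.comp hξ).aestronglyMeasurable
      (Filter.Eventually.of_forall fun ω => by rw [Real.norm_eq_abs]; exact hB _)
  have hθdef : θhat = fun ω =>
      (n : ℝ)⁻¹ * ∑ i : Fin n, g (X i ω)
        + ∑ S ∈ 𝕊, (nS S : ℝ)⁻¹ * ∑ j : Fin (nS S), h S (XS S j ω) := rfl
  have hn0 : (0:ℝ) < (n : ℝ) := by exact_mod_cast Nat.lt_of_lt_of_le Nat.zero_lt_one hn
  have hnS0 : ∀ S ∈ 𝕊, (0:ℝ) < (nS S : ℝ) := fun S hS => by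
    exact_mod_cast Nat.lt_of_lt_of_le Nat.zero_lt_one (hnS S hS)
  -- integrability of the pieces
  have hgint : ∀ i : Fin n, Integrable (fun ω => g (X i ω)) P :=
    fun i => hcomp_int g hgmeas _ hgbd (X i) (hXmeas i)
  have hhint : ∀ S ∈ 𝕊, ∀ j : Fin (nS S), Integrable (fun ω => h S (XS S j ω)) P :=
    fun S hS j => hcomp_int (h S) (hhmeas S hS) _ (hhbd S hS) (XS S j) (hXSmeas S j)
  have hμint : ∀ S ∈ 𝕊, Integrable (α S) μ :=
    fun S hS => (integrable_const (Bα S)).mono' (hαmeas S).aestronglyMeasurable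
      (Filter.Eventually.of_forall fun x => by rw [Real.norm_eq_abs]; exact hBα S x)
  have haint : Integrable a μ :=
    (integrable_const Ca).mono' hameas.aestronglyMeasurable
      (Filter.Eventually.of_forall fun x => by rw [Real.norm_eq_abs]; exact hCa x)
  -- key integral identities
  have hIα : ∀ S ∈ 𝕊, ∫ x, h S x ∂(ν S) = ∫ x, α S x ∂μ := by
    intro S hS
    rw [hνint S hS]
    congr 1
    funext x
    show r S x * (α S x / r S x) = α S x
    rw [mul_comm, div_mul_cancel₀ _ (ne_of_gt (hrpos S hS x))]
  have hIg : ∫ x, g x ∂μ = ∫ x, a x ∂μ - ∑ S ∈ 𝕊, ∫ x, α S x ∂μ := by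
    rw [hgdef]
    rw [integral_sub haint (integrable_finset_sum _ fun S hS => hμint S hS),
      integral_finset_sum _ fun S hS => hμint S hS]
  -- ===== unbiasedness =====
  have hunb : ∫ ω, θhat ω ∂P = ∫ x, a x ∂μ := by
    rw [hθdef]
    rw [integral_add ((integrable_finset_sum _ fun i _ => hgint i).const_mul _)
      (integrable_finset_sum _ fun S hS => ((integrable_finset_sum _
        fun j _ => hhint S hS j).const_mul _))]
    rw [integral_const_mul, integral_finset_sum _ fun i _ => hgint i]
    rw [integral_finset_sum _ fun S hS => ((integrable_finset_sum _
        fun j _ => hhint S hS j).const_mul _)]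
    have e1 : ∑ i : Fin n, ∫ ω, g (X i ω) ∂P = (n : ℝ) * ∫ x, g x ∂μ := by
      rw [Finset.sum_congr rfl fun i _ => hmapX i g hgmeas]
      simp [Finset.sum_const, mul_comm]
    have e2 : ∀ S ∈ 𝕊, ∫ ω, (nS S : ℝ)⁻¹ * ∑ j : Fin (nS S), h S (XS S j ω) ∂P
        = ∫ x, α S x ∂μ := by
      intro S hS
      rw [integral_const_mul, integral_finset_sum _ fun j _ => hhint S hS j]
      rw [Finset.sum_congr rfl fun j _ => (hmapXS S hS j (h S) (hhmeas S hS)).trans (hIα S hS)]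
      simp [Finset.sum_const]
      rw [← mul_assoc, inv_mul_cancel₀ (ne_of_gt (hnS0 S hS)), one_mul]
    rw [e1, Finset.sum_congr rfl e2, hIg]
    field_simp
    ring
  refine ⟨hunb, ?_⟩
  -- ===== variance bound =====
  set Vg := variance g μ with hVg
  set VS : Finset (Fin d) → ℝ := fun S => variance (h S) (ν S) with hVSd
  set IS : Finset (Fin d) → ℝ := fun S => ∫ x, (α S x) ^ 2 / (lam S * r S x) ∂μ with hISd
  set Mx := 𝕊.sup' h𝕊ne fun S => |(n : ℝ) * lam S / (nS S : ℝ) - 1| with hMx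
  have hMx0 : 0 ≤ Mx := by
    obtain ⟨S0, hS0⟩ := h𝕊ne
    rw [hMx]
    exact le_trans (abs_nonneg _) (Finset.le_sup' (fun S => |(n:ℝ) * lam S / (nS S : ℝ) - 1|) hS0)
  have hVg0 : 0 ≤ Vg := by rw [hVg]; exact variance_nonneg g μ
  set F : (Fin n ⊕ (Σ S : {S : Finset (Fin d) // S ∈ 𝕊}, Fin (nS S.1))) → (Fin d → ℝ) → ℝ :=
    Sum.elim (fun _ x => (n : ℝ)⁻¹ * g x) (fun p x => (nS p.1.1 : ℝ)⁻¹ * h p.1.1 x) with hFdef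
  set Y : (Fin n ⊕ (Σ S : {S : Finset (Fin d) // S ∈ 𝕊}, Fin (nS S.1))) → Ω → (Fin d → ℝ) :=
    Sum.elim X (fun p => XS p.1.1 p.2) with hYdef
  have hFmeas : ∀ k, Measurable (F k) := by
    rintro (i | ⟨S, j⟩)
    · exact hgmeas.const_mul _
    · exact (hhmeas S.1 S.2).const_mul _
  have hYindep : iIndepFun Y P := hIndep
  have hZindep := hYindep.comp F hFmeas
  have hθsum : θhat = ∑ k, F k ∘ Y k := by
    funext ω
    rw [hθdef]
    simp only [hFdef, hYdef, Finset.sum_apply, Fintype.sum_sum_type, Function.comp_apply,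
      Sum.elim_inl, Sum.elim_inr, Finset.mul_sum]
    congr 1
    rw [← Finset.sum_coe_sort 𝕊
      (fun S => ∑ j : Fin (nS S), (nS S : ℝ)⁻¹ * h S (XS S j ω)),
      ← Finset.univ_sigma_univ, Finset.sum_sigma]
  have hninv : (0:ℝ) < (n:ℝ)⁻¹ := inv_pos.mpr hn0
  have hZmem : ∀ k, MemLp (F k ∘ Y k) 2 P := by
    rintro (i | ⟨S, j⟩)
    · refine memLp_of_bdd P ((hgmeas.const_mul _).comp (hXmeas i)) ((n:ℝ)⁻¹ * (Ca + B2)) ?_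
      intro ω
      show |(n:ℝ)⁻¹ * g (X i ω)| ≤ _
      rw [abs_mul, abs_of_nonneg hninv.le]
      exact mul_le_mul_of_nonneg_left (hgbd _) hninv.le
    · have hpos : (0:ℝ) < (nS S.1 : ℝ)⁻¹ := inv_pos.mpr (hnS0 S.1 S.2)
      refine memLp_of_bdd P (((hhmeas S.1 S.2).const_mul _).comp (hXSmeas S.1 j))
        ((nS S.1 : ℝ)⁻¹ * (Bα S.1 / c)) ?_
      intro ω
      show |(nS S.1:ℝ)⁻¹ * h S.1 (XS S.1 j ω)| ≤ _
      rw [abs_mul, abs_of_nonneg hpos.le]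
      exact mul_le_mul_of_nonneg_left (hhbd S.1 S.2 _) hpos.le
  have hvarsum : variance θhat P = ∑ k, variance (F k ∘ Y k) P := by
    rw [hθsum]
    exact IndepFun.variance_sum (fun k _ => hZmem k) (fun k _ l _ hkl => hZindep.indepFun hkl)
  have hvark1 : ∀ i : Fin n, variance (F (Sum.inl i) ∘ Y (Sum.inl i)) P = (n:ℝ)⁻¹ ^ 2 * Vg := by
    intro i
    have h1 : F (Sum.inl i) ∘ Y (Sum.inl i) = fun ω => (n:ℝ)⁻¹ * g (X i ω) := rfl
    rw [h1, variance_const_mul]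
    congr 1
    rw [hVg, variance_comp_map P (X i) (hXmeas i) g hgmeas (Ca + B2) hgbd, hXlaw i]
  have hvark2 : ∀ (p : Σ S : {S : Finset (Fin d) // S ∈ 𝕊}, Fin (nS S.1)),
      variance (F (Sum.inr p) ∘ Y (Sum.inr p)) P = (nS p.1.1:ℝ)⁻¹ ^ 2 * VS p.1.1 := by
    rintro ⟨S, j⟩
    have h1 : F (Sum.inr ⟨S, j⟩) ∘ Y (Sum.inr ⟨S, j⟩)
        = fun ω => (nS S.1:ℝ)⁻¹ * h S.1 (XS S.1 j ω) := rfl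
    rw [h1, variance_const_mul]
    congr 1
    rw [hVSd]
    show variance (fun ω => h S.1 (XS S.1 j ω)) P = variance (h S.1) (ν S.1)
    rw [variance_comp_map P (XS S.1 j) (hXSmeas S.1 j) (h S.1) (hhmeas S.1 S.2)
      (Bα S.1 / c) (hhbd S.1 S.2), hXSlaw S.1 S.2 j]
  have hsumvar : variance θhat P
      = (n:ℝ) * ((n:ℝ)⁻¹ ^ 2 * Vg) + ∑ S ∈ 𝕊, (nS S : ℝ) * ((nS S:ℝ)⁻¹ ^ 2 * VS S) := by
    rw [hvarsum, Fintype.sum_sum_type]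
    congr 1
    · simp [hvark1, Finset.sum_const, Finset.card_univ, mul_comm]
    · rw [← Finset.sum_coe_sort 𝕊 (fun S => (nS S : ℝ) * ((nS S:ℝ)⁻¹ ^ 2 * VS S)),
        ← Finset.univ_sigma_univ, Finset.sum_sigma]
      refine Finset.sum_congr rfl fun S _ => ?_
      rw [Finset.sum_congr rfl fun j _ => hvark2 ⟨S, j⟩]
      simp [Finset.sum_const, mul_comm]
  have hVSle : ∀ S ∈ 𝕊, VS S ≤ lam S * IS S := by
    intro S hS
    haveI := hνprob S hS
    have hle : VS S ≤ ∫ x, (h S x) ^ 2 ∂(ν S) := by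
      have h2 := variance_le_expectation_sq (μ := ν S) (hhmeas S hS).aestronglyMeasurable
      rw [hVSd]
      simpa [Pi.pow_apply] using h2
    refine hle.trans (le_of_eq ?_)
    rw [hνint S hS, hISd]
    rw [← integral_const_mul]
    refine integral_congr_ae (Filter.Eventually.of_forall fun x => ?_)
    show r S x * (α S x / r S x) ^ 2 = lam S * (α S x ^ 2 / (lam S * r S x))
    have hr0 : r S x ≠ 0 := ne_of_gt (hrpos S hS x)
    have hl0 : lam S ≠ 0 := ne_of_gt (hlam S hS)
    field_simp
  have hISnn : ∀ S ∈ 𝕊, 0 ≤ IS S := by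
    intro S hS
    refine integral_nonneg fun x => ?_
    have h1 : 0 < lam S * r S x := mul_pos (hlam S hS) (hrpos S hS x)
    exact div_nonneg (sq_nonneg _) h1.le
  have hcoef : ∀ S ∈ 𝕊, (n:ℝ) * (nS S:ℝ)⁻¹ * lam S ≤ 1 + Mx := by
    intro S hS
    have h1 : (n:ℝ) * lam S / (nS S:ℝ) - 1 ≤ Mx := by
      rw [hMx]
      exact le_trans (le_abs_self _) (Finset.le_sup' (fun S => |(n:ℝ) * lam S / (nS S : ℝ) - 1|) hS)
    have h2 : (n:ℝ) * (nS S:ℝ)⁻¹ * lam S = (n:ℝ) * lam S / (nS S:ℝ) := by ring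
    linarith
  have hobj : objective μ 𝕊 lam r a α = Vg + ∑ S ∈ 𝕊, IS S := rfl
  rw [hobj]
  calc (n:ℝ) * variance θhat P
      = Vg + ∑ S ∈ 𝕊, ((n:ℝ) * (nS S:ℝ)⁻¹) * VS S := by
        rw [hsumvar, mul_add, Finset.mul_sum]
        congr 1
        · have hne : (n:ℝ) ≠ 0 := ne_of_gt hn0
          field_simp
        · refine Finset.sum_congr rfl fun S hS => ?_
          have h0 : (nS S : ℝ) ≠ 0 := ne_of_gt (hnS0 S hS)
          field_simp
    _ ≤ Vg + ∑ S ∈ 𝕊, (1 + Mx) * IS S := by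
        refine add_le_add_right (Finset.sum_le_sum fun S hS => ?_) Vg
        calc (n:ℝ) * (nS S:ℝ)⁻¹ * VS S
            ≤ (n:ℝ) * (nS S:ℝ)⁻¹ * (lam S * IS S) :=
              mul_le_mul_of_nonneg_left (hVSle S hS)
                (mul_nonneg hn0.le (inv_nonneg.mpr (hnS0 S hS).le))
          _ = ((n:ℝ) * (nS S:ℝ)⁻¹ * lam S) * IS S := by ring
          _ ≤ (1 + Mx) * IS S := mul_le_mul_of_nonneg_right (hcoef S hS) (hISnn S hS)
    _ ≤ (1 + Mx) * (Vg + ∑ S ∈ 𝕊, IS S) := by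
        rw [mul_add, Finset.mul_sum]
        refine add_le_add ?_ (le_refl _)
        nlinarith
end

section
/- Suppose a is bounded. Then for every M ∈ ℕ and every S ∈ 𝕊, with η = 1/|𝕊| the function α_S^{(M)} = ∑_{m=1}^{M} (−1)^{m−1} ∑_{𝐒 ∈ 𝕊^{(m)} : S_m = S} b_{M,η}(m) ā_𝐒^{(m)} satisfies sup_x | α_S^{(M)}(x) | ≤ 2 ‖a‖_∞ 3^M. -/
open MeasureTheory ProbabilityTheory

lemma chainsEndAt_mem {d : ℕ} {𝕊 : Finset (Finset (Fin d))} {m : ℕ} {S : Finset (Fin d)}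
    {Ss : Fin m → Finset (Fin d)} (h : Ss ∈ chainsEndAt 𝕊 m S) :
    (∀ j, Ss j ∈ 𝕊) ∧ ∀ j : Fin m, (j : ℕ) = m - 1 → Ss j = S := by
  simp only [chainsEndAt, Finset.mem_filter] at h
  exact ⟨h.2.1.1, h.2.2⟩

lemma chainsEndAt_card_le {d : ℕ} (𝕊 : Finset (Finset (Fin d))) (m : ℕ) (S : Finset (Fin d)) :
    (chainsEndAt 𝕊 (m + 1) S).card ≤ 𝕊.card ^ m := by
  have hmap : ∀ Ss ∈ chainsEndAt 𝕊 (m + 1) S,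
      (fun j : Fin m => Ss j.castSucc) ∈ Fintype.piFinset fun _ : Fin m => 𝕊 :=
    fun Ss hSs => Fintype.mem_piFinset.mpr fun j => (chainsEndAt_mem hSs).1 _
  have hinj : Set.InjOn (fun (Ss : Fin (m + 1) → Finset (Fin d)) (j : Fin m) => Ss j.castSucc)
      (chainsEndAt 𝕊 (m + 1) S) := by
    intro Ss h1 Ss' h2 heq
    funext j
    induction j using Fin.lastCases with
    | last =>
      rw [(chainsEndAt_mem h1).2 (Fin.last m) (by simp),
        (chainsEndAt_mem h2).2 (Fin.last m) (by simp)]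
    | cast i => exact congrFun heq i
  have key := Finset.card_le_card_of_injOn _ hmap hinj
  simpa [Fintype.card_piFinset_const] using key


lemma bProb_aux_le {M m : ℕ} (hm : m ≤ M) {η : ℝ} (h0 : 0 ≤ η) (h1 : η ≤ 1) :
    (∑ i ∈ Finset.Icc m M, (M.choose i : ℝ) * η ^ i * (1 - η) ^ (M - i))
      ≤ (M.choose m : ℝ) * η ^ m := by
  have h1' : (0:ℝ) ≤ 1 - η := by linarith
  have key : ∀ i ∈ Finset.Icc m M,
      (M.choose i : ℝ) * η ^ i * (1 - η) ^ (M - i)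
        ≤ (M.choose m : ℝ) * η ^ m *
          (((M - m).choose (i - m) : ℝ) * η ^ (i - m) * (1 - η) ^ (M - m - (i - m))) := by
    intro i hi
    obtain ⟨him, hiM⟩ := Finset.mem_Icc.mp hi
    have hid : Nat.choose M i * Nat.choose i m = Nat.choose M m * Nat.choose (M - m) (i - m) :=
      Nat.choose_mul (n := M) him
    have hpos : 1 ≤ i.choose m := Nat.choose_pos him
    have hchoose : (M.choose i : ℝ) ≤ (M.choose m : ℝ) * ((M - m).choose (i - m) : ℝ) := by
      calc (M.choose i : ℝ) ≤ ((M.choose i * i.choose m : ℕ) : ℝ) := by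
            exact_mod_cast Nat.le_mul_of_pos_right _ hpos
        _ = (M.choose m : ℝ) * ((M - m).choose (i - m) : ℝ) := by rw [hid]; push_cast; ring
    have hηi : η ^ i = η ^ m * η ^ (i - m) := by rw [← pow_add]; congr 1; omega
    have hMi : M - i = M - m - (i - m) := by omega
    rw [hηi, hMi]
    calc (M.choose i : ℝ) * (η ^ m * η ^ (i - m)) * (1 - η) ^ (M - m - (i - m))
        ≤ ((M.choose m : ℝ) * ((M - m).choose (i - m) : ℝ)) * (η ^ m * η ^ (i - m))
            * (1 - η) ^ (M - m - (i - m)) := by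
          apply mul_le_mul_of_nonneg_right (mul_le_mul_of_nonneg_right hchoose (by positivity))
            (by positivity)
      _ = _ := by ring
  calc (∑ i ∈ Finset.Icc m M, (M.choose i : ℝ) * η ^ i * (1 - η) ^ (M - i))
      ≤ ∑ i ∈ Finset.Icc m M, (M.choose m : ℝ) * η ^ m *
          (((M - m).choose (i - m) : ℝ) * η ^ (i - m) * (1 - η) ^ (M - m - (i - m))) :=
        Finset.sum_le_sum key
    _ = (M.choose m : ℝ) * η ^ m *
          ∑ i ∈ Finset.Icc m M,
            (((M - m).choose (i - m) : ℝ) * η ^ (i - m) * (1 - η) ^ (M - m - (i - m))) := by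
        rw [Finset.mul_sum]
    _ = (M.choose m : ℝ) * η ^ m * 1 := by
        congr 1
        rw [← Finset.Ico_add_one_right_eq_Icc, Finset.sum_Ico_eq_sum_range]
        have hR : M + 1 - m = (M - m) + 1 := by omega
        rw [hR]
        have := add_pow η (1 - η) (M - m)
        simp only [show η + (1 - η) = 1 by ring, one_pow] at this
        conv_rhs => rw [this]
        apply Finset.sum_congr rfl
        intro j hj
        have h2 : m + j - m = j := by omega
        rw [h2]
        ring
    _ = (M.choose m : ℝ) * η ^ m := mul_one _

lemma integrable_of_bdd {d : ℕ} {μ : Measure (Fin d → ℝ)} [IsProbabilityMeasure μ]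
    {f : (Fin d → ℝ) → ℝ} (hf : Measurable f) {C : ℝ} (hC : ∀ x, |f x| ≤ C) :
    Integrable f μ :=
  ⟨hf.aestronglyMeasurable, HasFiniteIntegral.of_bounded (C := C)
    (Filter.Eventually.of_forall fun x => by simpa [Real.norm_eq_abs] using hC x)⟩

lemma abarF_bound {d : ℕ} (μ : Measure (Fin d → ℝ)) [IsProbabilityMeasure μ]
    (𝕊 : Finset (Finset (Fin d)))
    (lam : Finset (Fin d) → ℝ) (hlam : ∀ S ∈ 𝕊, 0 < lam S)
    (r : Finset (Fin d) → (Fin d → ℝ) → ℝ)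
    (hrpos : ∀ S ∈ 𝕊, ∀ x, 0 < r S x)
    (hrmeas : ∀ S ∈ 𝕊, Measurable (r S))
    (K : Finset (Fin d) → Kernel (Fin d → ℝ) (Fin d → ℝ))
    (hKmarkov : ∀ S ∈ 𝕊, IsMarkovKernel (K S))
    (a : (Fin d → ℝ) → ℝ) (hameas : Measurable a)
    (A : ℝ) (hA : ∀ x, |a x| ≤ A) :
    ∀ m (Ss : Fin m → Finset (Fin d)), (∀ j, Ss j ∈ 𝕊) →
      Measurable (abarF μ K lam r a m Ss) ∧
        ∀ x, |abarF μ K lam r a m Ss x| ≤ 2 ^ m * A := by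
  intro m
  induction m with
  | zero =>
    intro Ss _
    exact ⟨hameas, fun x => by simpa [abarF] using hA x⟩
  | succ m ih =>
    intro Ss hSs
    have hS : Ss (Fin.last m) ∈ 𝕊 := hSs _
    set S := Ss (Fin.last m) with hSdef
    haveI := hKmarkov S hS
    obtain ⟨hgmeas, hgbd⟩ := ih (fun j => Ss j.castSucc) (fun j => hSs _)
    set g := abarF μ K lam r a m (fun j => Ss j.castSucc) with hgdef
    set B := (2 : ℝ) ^ m * A with hBdef
    have hB0 : 0 ≤ B := le_trans (abs_nonneg _) (hgbd (fun _ => 0))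
    -- wgt properties
    have hwpos : ∀ x, 0 < wgt lam r S x := by
      intro x
      have ht : 0 < lam S * r S x := mul_pos (hlam S hS) (hrpos S hS x)
      exact div_pos ht (by linarith)
    have hwle : ∀ x, wgt lam r S x ≤ 1 := by
      intro x
      have ht : 0 < lam S * r S x := mul_pos (hlam S hS) (hrpos S hS x)
      rw [wgt, div_le_one (by linarith)]
      linarith
    have hwmeas : Measurable (wgt lam r S) := by
      unfold wgt
      exact (measurable_const.mul (hrmeas S hS)).div
        (measurable_const.add (measurable_const.mul (hrmeas S hS)))
    have hwabs : ∀ x, |wgt lam r S x| ≤ 1 := fun x => by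
      rw [abs_of_pos (hwpos x)]; exact hwle x
    have hwint : Integrable (wgt lam r S) μ := integrable_of_bdd hwmeas hwabs
    -- integral against kernel
    have hImeas : Measurable fun x => ∫ y, g y ∂((K S) x) := by
      have h : StronglyMeasurable fun x : Fin d → ℝ =>
          ∫ y, (fun p : (Fin d → ℝ) × (Fin d → ℝ) => g p.2) (x, y) ∂((K S) x) :=
        (hgmeas.comp measurable_snd).stronglyMeasurable.integral_kernel_prod_right'
      exact h.measurable
    have hIbd : ∀ x, |∫ y, g y ∂((K S) x)| ≤ B := by
      intro x
      calc |∫ y, g y ∂((K S) x)| = ‖∫ y, g y ∂((K S) x)‖ := (Real.norm_eq_abs _).symm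
        _ ≤ B * (((K S) x) Set.univ).toReal :=
            norm_integral_le_of_norm_le_const
              (Filter.Eventually.of_forall fun y => by
                simpa [Real.norm_eq_abs] using hgbd y)
        _ = B := by simp
    -- denominator
    have hden : 0 < ∫ x, wgt lam r S x ∂μ := by
      rw [integral_pos_iff_support_of_nonneg (fun x => (hwpos x).le) hwint]
      have hsupp : Function.support (wgt lam r S) = Set.univ :=
        Set.eq_univ_of_forall fun x => (hwpos x).ne'
      rw [hsupp]
      simp
    -- numerator
    have hwgmeas : Measurable fun x => wgt lam r S x * g x := hwmeas.mul hgmeas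
    have hwgabs : ∀ x, |wgt lam r S x * g x| ≤ B := by
      intro x
      rw [abs_mul]
      calc |wgt lam r S x| * |g x| ≤ 1 * B :=
        mul_le_mul (hwabs x) (hgbd x) (abs_nonneg _) zero_le_one
      _ = B := one_mul _
    have hwgint : Integrable (fun x => wgt lam r S x * g x) μ :=
      integrable_of_bdd hwgmeas hwgabs
    have hnum : |∫ x, wgt lam r S x * g x ∂μ| ≤ B * ∫ x, wgt lam r S x ∂μ := by
      calc |∫ x, wgt lam r S x * g x ∂μ| ≤ ∫ x, |wgt lam r S x * g x| ∂μ := by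
            simpa only [Real.norm_eq_abs] using
              norm_integral_le_integral_norm (μ := μ) fun x => wgt lam r S x * g x
        _ ≤ ∫ x, wgt lam r S x * B ∂μ := by
            apply integral_mono hwgint.abs (hwint.mul_const B)
            intro x
            show |wgt lam r S x * g x| ≤ wgt lam r S x * B
            rw [abs_mul, abs_of_pos (hwpos x)]
            exact mul_le_mul_of_nonneg_left (hgbd x) (hwpos x).le
        _ = (∫ x, wgt lam r S x ∂μ) * B := integral_mul_const B _
        _ = B * ∫ x, wgt lam r S x ∂μ := mul_comm _ _
    have hθ : |(∫ x, wgt lam r S x * g x ∂μ) / ∫ x, wgt lam r S x ∂μ| ≤ B := by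
      rw [abs_div, abs_of_pos hden, div_le_iff₀ hden]
      exact hnum
    constructor
    · show Measurable fun x => wgt lam r S x *
        ((∫ y, g y ∂((K S) x)) -
          (∫ x', wgt lam r S x' * g x' ∂μ) / ∫ x', wgt lam r S x' ∂μ)
      exact hwmeas.mul (hImeas.sub measurable_const)
    · intro x
      show |wgt lam r S x *
        ((∫ y, g y ∂((K S) x)) -
          (∫ x', wgt lam r S x' * g x' ∂μ) / ∫ x', wgt lam r S x' ∂μ)| ≤ 2 ^ (m + 1) * A
      rw [abs_mul]
      calc |wgt lam r S x| * |(∫ y, g y ∂((K S) x)) -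
          (∫ x', wgt lam r S x' * g x' ∂μ) / ∫ x', wgt lam r S x' ∂μ|
          ≤ 1 * (B + B) := by
            apply mul_le_mul (hwabs x) ?_ (abs_nonneg _) zero_le_one
            exact (abs_sub _ _).trans (add_le_add (hIbd x) hθ)
        _ = 2 ^ (m + 1) * A := by rw [hBdef]; ring


/-- The uniform bound `‖α_S^{(M)}‖_∞ ≤ 2 ‖a‖_∞ 3^M` on the approximate
influence-function components, with step size `η = 1/|𝕊|`. -/
theorem alphaM_uniform_bound
    (d : ℕ) (hd : 2 ≤ d)
    (μ : Measure (Fin d → ℝ)) [IsProbabilityMeasure μ]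
    (𝕊 : Finset (Finset (Fin d))) (h𝕊ne : 𝕊.Nonempty)
    (h𝕊proper : ∀ S ∈ 𝕊, S ≠ Finset.univ)
    (lam : Finset (Fin d) → ℝ) (hlam : ∀ S ∈ 𝕊, 0 < lam S)
    (r : Finset (Fin d) → (Fin d → ℝ) → ℝ)
    (hrpos : ∀ S ∈ 𝕊, ∀ x, 0 < r S x)
    (hrdep : ∀ S ∈ 𝕊, DependsOnCoords S (r S))
    (hrmeas : ∀ S ∈ 𝕊, Measurable (r S))
    (hrint : ∀ S ∈ 𝕊, ∫ x, r S x ∂μ = 1)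
    (a : (Fin d → ℝ) → ℝ) (hameas : Measurable a)
    (habd : ∃ Ca, ∀ x, |a x| ≤ Ca)
    -- K S is the conditional law of X given X_S
    (K : Finset (Fin d) → Kernel (Fin d → ℝ) (Fin d → ℝ))
    (hKmarkov : ∀ S ∈ 𝕊, IsMarkovKernel (K S))
    (hKdep : ∀ S ∈ 𝕊, ∀ x y : Fin d → ℝ, (∀ i ∈ S, x i = y i) → (K S) x = (K S) y)
    (hKdisint : ∀ S ∈ 𝕊, ∀ g : ({i : Fin d // i ∈ S} → ℝ) → (Fin d → ℝ) → ℝ,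
      Measurable (Function.uncurry g) → (∀ p y, |g p y| ≤ 1) →
      ∫ x, (∫ y, g (fun i => x i.1) y ∂((K S) x)) ∂μ = ∫ x, g (fun i => x i.1) x ∂μ) :
    ∀ M : ℕ, 1 ≤ M → ∀ S ∈ 𝕊, ∀ x : Fin d → ℝ,
      |alphaM μ K 𝕊 lam r a M S x| ≤ 2 * (⨆ y, |a y|) * 3 ^ M := by
  intro M hM S hS x
  obtain ⟨Ca, hCa⟩ := habd
  set A := ⨆ y, |a y| with hAdef
  have hbdd : BddAbove (Set.range fun y => |a y|) :=
    ⟨Ca, by rintro _ ⟨y, rfl⟩; exact hCa y⟩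
  have hA : ∀ y : Fin d → ℝ, |a y| ≤ A := fun y => le_ciSup hbdd y
  have hA0 : 0 ≤ A := le_trans (abs_nonneg _) (hA fun _ => 0)
  have hk1 : 1 ≤ (𝕊.card : ℝ) := by exact_mod_cast Finset.card_pos.mpr h𝕊ne
  set k : ℝ := (𝕊.card : ℝ) with hkdef
  have hk0 : 0 < k := lt_of_lt_of_le one_pos hk1
  have hη0 : (0:ℝ) ≤ k⁻¹ := inv_nonneg.mpr hk0.le
  have hη1 : k⁻¹ ≤ 1 := inv_le_one_of_one_le₀ hk1
  have hη1' : (0:ℝ) ≤ 1 - k⁻¹ := by linarith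
  have habar := abarF_bound μ 𝕊 lam hlam r hrpos hrmeas K hKmarkov a hameas A hA
  have hb0 : ∀ m : ℕ, 0 ≤ bProb M k⁻¹ m := by
    intro m
    apply Finset.sum_nonneg
    intro i _
    have h1 : (0:ℝ) ≤ (M.choose i : ℝ) := Nat.cast_nonneg _
    have h2 : (0:ℝ) ≤ (k⁻¹) ^ i := pow_nonneg hη0 _
    have h3 : (0:ℝ) ≤ (1 - k⁻¹) ^ (M - i) := pow_nonneg hη1' _
    exact mul_nonneg (mul_nonneg h1 h2) h3
  have hterm : ∀ m ∈ Finset.Icc 1 M,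
      |(-1 : ℝ) ^ (m - 1) * bProb M k⁻¹ m *
        ∑ Ss ∈ chainsEndAt 𝕊 m S, abarF μ K lam r a m Ss x|
        ≤ (M.choose m : ℝ) * 2 ^ m * A := by
    intro m hm
    obtain ⟨hm1, hmM⟩ := Finset.mem_Icc.mp hm
    obtain ⟨m', rfl⟩ : ∃ m', m = m' + 1 := ⟨m - 1, by omega⟩
    have hcard : ((chainsEndAt 𝕊 (m' + 1) S).card : ℝ) ≤ k ^ m' := by
      have h := chainsEndAt_card_le 𝕊 m' S
      calc ((chainsEndAt 𝕊 (m' + 1) S).card : ℝ) ≤ ((𝕊.card ^ m' : ℕ) : ℝ) := by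
            exact_mod_cast h
        _ = k ^ m' := by push_cast; rfl
    have hsig : |∑ Ss ∈ chainsEndAt 𝕊 (m' + 1) S, abarF μ K lam r a (m' + 1) Ss x|
        ≤ k ^ m' * (2 ^ (m' + 1) * A) := by
      refine (Finset.abs_sum_le_sum_abs _ _).trans ?_
      refine (Finset.sum_le_card_nsmul _ _ (2 ^ (m' + 1) * A) ?_).trans ?_
      · intro Ss hSs
        exact (habar _ Ss (chainsEndAt_mem hSs).1).2 x
      · rw [nsmul_eq_mul]
        exact mul_le_mul_of_nonneg_right hcard (by positivity)
    have hb : bProb M k⁻¹ (m' + 1) ≤ (M.choose (m' + 1) : ℝ) * (k⁻¹) ^ (m' + 1) :=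
      bProb_aux_le hmM hη0 hη1
    have hkk : (k⁻¹) ^ (m' + 1) * k ^ m' = k⁻¹ := by
      rw [pow_succ, mul_right_comm, ← mul_pow, inv_mul_cancel₀ hk0.ne', one_pow, one_mul]
    calc |(-1 : ℝ) ^ (m' + 1 - 1) * bProb M k⁻¹ (m' + 1) *
          ∑ Ss ∈ chainsEndAt 𝕊 (m' + 1) S, abarF μ K lam r a (m' + 1) Ss x|
        = bProb M k⁻¹ (m' + 1) *
          |∑ Ss ∈ chainsEndAt 𝕊 (m' + 1) S, abarF μ K lam r a (m' + 1) Ss x| := by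
          rw [abs_mul, abs_mul, abs_pow, abs_neg, abs_one, one_pow, one_mul,
            abs_of_nonneg (hb0 _)]
      _ ≤ ((M.choose (m' + 1) : ℝ) * (k⁻¹) ^ (m' + 1)) * (k ^ m' * (2 ^ (m' + 1) * A)) :=
          mul_le_mul hb hsig (abs_nonneg _) (by positivity)
      _ = ((M.choose (m' + 1) : ℝ) * 2 ^ (m' + 1) * A) * ((k⁻¹) ^ (m' + 1) * k ^ m') := by
          ring
      _ ≤ ((M.choose (m' + 1) : ℝ) * 2 ^ (m' + 1) * A) * 1 := by
          apply mul_le_mul_of_nonneg_left _ (by positivity)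
          rw [hkk]
          exact hη1
      _ = (M.choose (m' + 1) : ℝ) * 2 ^ (m' + 1) * A := mul_one _
  have h3M : (∑ m ∈ Finset.range (M + 1), (M.choose m : ℝ) * 2 ^ m) = 3 ^ M := by
    have h := add_pow (2 : ℝ) 1 M
    simp only [one_pow, mul_one] at h
    rw [show (2 : ℝ) + 1 = 3 by norm_num] at h
    rw [h]
    exact Finset.sum_congr rfl fun i _ => by ring
  calc |alphaM μ K 𝕊 lam r a M S x|
      ≤ ∑ m ∈ Finset.Icc 1 M, |(-1 : ℝ) ^ (m - 1) * bProb M k⁻¹ m *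
          ∑ Ss ∈ chainsEndAt 𝕊 m S, abarF μ K lam r a m Ss x| := by
        rw [alphaM]
        exact Finset.abs_sum_le_sum_abs _ _
    _ ≤ ∑ m ∈ Finset.Icc 1 M, (M.choose m : ℝ) * 2 ^ m * A := Finset.sum_le_sum hterm
    _ = (∑ m ∈ Finset.Icc 1 M, (M.choose m : ℝ) * 2 ^ m) * A := by rw [Finset.sum_mul]
    _ ≤ (∑ m ∈ Finset.range (M + 1), (M.choose m : ℝ) * 2 ^ m) * A := by
        apply mul_le_mul_of_nonneg_right _ hA0
        apply Finset.sum_le_sum_of_subset_of_nonneg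
        · intro i hi
          simp only [Finset.mem_Icc, Finset.mem_range] at hi ⊢
          omega
        · intro i _ _
          positivity
    _ = 3 ^ M * A := by rw [h3M]
    _ ≤ 2 * A * 3 ^ M := by nlinarith [pow_nonneg (by norm_num : (0:ℝ) ≤ 3) M, hA0]
end
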